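/- Let B_w be a bounded bilateral weighted backward shift on ℓ^p(ℤ), 1 ≤ p < ∞. If there exist x ∈ ℓ^p(ℤ) and a nonzero y ∈ ℓ^p(ℤ) such that y is a limit point of the orbit (B_w^n x)_{n≥0}, then for every p₀ ≥ 0 and every ε > 0 there exists n ≥ p₀ such that ∏_{ν=1}^{p₀+n} |w_ν| > 1/ε and ∏_{ν=p₀−n+1}^{0} |w_ν| < ε. -/

import Mathlib

open Filter

lemma stmt13_tri (u v : ℝ) : |u - v| ≤ |u| + |v| := by
  rw [sub_eq_add_neg]
  exact (abs_add_le u (-v)).trans_eq (by rw [abs_neg])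

lemma stmt13_prodIoc (f : ℤ → ℝ) {a b c : ℤ} (hab : a ≤ b) (hbc : b ≤ c) :
    (∏ i ∈ Finset.Ioc a b, f i) * ∏ i ∈ Finset.Ioc b c, f i
      = ∏ i ∈ Finset.Ioc a c, f i := by
  rw [← Finset.prod_union ?hd, Finset.Ioc_union_Ioc_eq_Ioc hab hbc]
  case hd =>
    rw [Finset.disjoint_left]
    intro i hi1 hi2
    simp only [Finset.mem_Ioc] at hi1 hi2
    omega

lemma stmt13_iter (w : ℤ → ℝ) (Bw : (ℤ → ℝ) → (ℤ → ℝ))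
    (hBw : Bw = fun z k => w (k + 1) * z (k + 1)) :
    ∀ (m : ℕ) (u : ℤ → ℝ) (k : ℤ),
      (Bw^[m] u) k = (∏ ν ∈ Finset.Ioc k (k + (m : ℤ)), w ν) * u (k + (m : ℤ)) := by
  intro m
  induction m with
  | zero => intro u k; simp
  | succ m ih =>
      intro u k
      have h1 : k ≤ k + (m : ℤ) := le_add_of_nonneg_right (Int.natCast_nonneg m)
      have h2 : k + (m : ℤ) ≤ k + (m : ℤ) + 1 := by linarith
      have hsingle : Finset.Ioc (k + (m:ℤ)) (k + (m:ℤ) + 1) = {k + (m:ℤ) + 1} := by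
        ext i
        simp only [Finset.mem_Ioc, Finset.mem_singleton]
        omega
      have hcast : ((m + 1 : ℕ) : ℤ) = (m : ℤ) + 1 := by push_cast; ring
      have harg : k + ((m : ℤ) + 1) = k + (m:ℤ) + 1 := by ring
      have hBu : (Bw u) (k + (m:ℤ)) = w (k + (m:ℤ) + 1) * u (k + (m:ℤ) + 1) := by
        rw [hBw]
      rw [Function.iterate_succ_apply, ih (Bw u) k, hBu, hcast, harg,
        ← stmt13_prodIoc w h1 h2, hsingle, Finset.prod_singleton]
      ring

lemma stmt13_summable (p : ℝ) (hp : 1 ≤ p) (w : ℤ → ℝ)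
    (C : ℝ) (hbd : ∀ k, |w k| ≤ C)
    (Bw : (ℤ → ℝ) → (ℤ → ℝ)) (hBw : Bw = fun z k => w (k + 1) * z (k + 1))
    (x : ℤ → ℝ) (hx : Summable fun k => |x k| ^ p) :
    ∀ m : ℕ, Summable fun k => |(Bw^[m] x) k| ^ p := by
  have hp0 : (0:ℝ) ≤ p := le_trans zero_le_one hp
  have hC0 : (0:ℝ) ≤ C := le_trans (abs_nonneg _) (hbd 0)
  intro m
  induction m with
  | zero => simpa using hx
  | succ m ih =>
      have hvs : Summable fun k : ℤ => |(Bw^[m] x) (k + 1)| ^ p := by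
        have := (Equiv.addRight (1:ℤ)).summable_iff.mpr ih
        simpa [Function.comp_def] using this
      apply Summable.of_nonneg_of_le
        (fun k => Real.rpow_nonneg (abs_nonneg _) p) _ (hvs.mul_left (C ^ p))
      intro k
      have hstep : (Bw^[m+1] x) k = w (k+1) * (Bw^[m] x) (k+1) := by
        rw [Function.iterate_succ_apply', hBw]
      rw [hstep]
      calc |w (k+1) * (Bw^[m] x) (k+1)| ^ p
          = (|w (k+1)| * |(Bw^[m] x) (k+1)|) ^ p := by rw [abs_mul]
        _ ≤ (C * |(Bw^[m] x) (k+1)|) ^ p :=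
            Real.rpow_le_rpow (by positivity)
              (mul_le_mul_of_nonneg_right (hbd _) (abs_nonneg _)) hp0
        _ = C ^ p * |(Bw^[m] x) (k+1)| ^ p := Real.mul_rpow hC0 (abs_nonneg _)

lemma stmt13_diff_summable (p : ℝ) (hp : 1 ≤ p) (f g : ℤ → ℝ)
    (hf : Summable fun k => |f k| ^ p) (hg : Summable fun k => |g k| ^ p) :
    Summable fun k => |f k - g k| ^ p := by
  have hp0 : (0:ℝ) ≤ p := le_trans zero_le_one hp
  apply Summable.of_nonneg_of_le (fun k => Real.rpow_nonneg (abs_nonneg _) p)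
    (fun k => ?_) (((hf.add hg).mul_left ((2:ℝ) ^ p)))
  have h1 : |f k - g k| ≤ 2 * max |f k| |g k| := by
    have h2 : |f k - g k| ≤ |f k| + |g k| := stmt13_tri _ _
    have h3 := le_max_left |f k| |g k|
    have h4 := le_max_right |f k| |g k|
    linarith
  calc |f k - g k| ^ p ≤ (2 * max |f k| |g k|) ^ p :=
        Real.rpow_le_rpow (abs_nonneg _) h1 hp0
    _ = 2 ^ p * (max |f k| |g k|) ^ p :=
        Real.mul_rpow (by norm_num) (le_max_of_le_left (abs_nonneg _))
    _ ≤ 2 ^ p * (|f k| ^ p + |g k| ^ p) := by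
        apply mul_le_mul_of_nonneg_left _ (Real.rpow_nonneg (by norm_num) p)
        rcases le_total |f k| |g k| with h | h
        · rw [max_eq_right h]
          exact le_add_of_nonneg_left (Real.rpow_nonneg (abs_nonneg _) p)
        · rw [max_eq_left h]
          exact le_add_of_nonneg_right (Real.rpow_nonneg (abs_nonneg _) p)

set_option maxHeartbeats 2000000 in
theorem stmt13 (p : ℝ) (hp : 1 ≤ p) (w : ℤ → ℝ) (hw0 : ∀ k, w k ≠ 0)
    (C : ℝ) (hbd : ∀ k, |w k| ≤ C)
    (Bw : (ℤ → ℝ) → (ℤ → ℝ)) (hBw : Bw = fun z k => w (k + 1) * z (k + 1))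
    (x y : ℤ → ℝ)
    (hx : Summable fun k => |x k| ^ p) (hy : Summable fun k => |y k| ^ p)
    (hy0 : y ≠ 0)
    -- y is a limit point of the orbit of x under B_w
    (hlim : ∃ n : ℕ → ℕ, StrictMono n ∧
      Tendsto (fun j => ∑' k : ℤ, |Bw^[n j] x k - y k| ^ p) atTop (nhds 0)) :
    ∀ p₀ : ℕ, ∀ ε : ℝ, 0 < ε → ∃ n : ℕ, p₀ ≤ n ∧
      (∏ ν ∈ Finset.Icc (1 : ℤ) ((p₀ : ℤ) + n), |w ν|) > 1 / ε ∧
      (∏ ν ∈ Finset.Icc ((p₀ : ℤ) - n + 1) 0, |w ν|) < ε := by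
  intro p₀ ε hε
  obtain ⟨φ, hφ, hE⟩ := hlim
  have hp0 : (0:ℝ) ≤ p := le_trans zero_le_one hp
  set Cm : ℝ := max C 1 with hCmdef
  have hCm1 : (1:ℝ) ≤ Cm := le_max_right _ _
  have hCm0 : (0:ℝ) < Cm := lt_of_lt_of_le one_pos hCm1
  obtain ⟨q, hq⟩ : ∃ q, y q ≠ 0 := by
    by_contra h
    push_neg at h
    exact hy0 (funext h)
  set Y : ℝ := |y q| with hYdef
  have hYpos : 0 < Y := abs_pos.mpr hq
  have hiter := stmt13_iter w Bw hBw
  have hsum : ∀ j : ℕ, Summable fun k => |(Bw^[φ j] x) k| ^ p :=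
    fun j => stmt13_summable p hp w C hbd Bw hBw x hx (φ j)
  have hdiffs : ∀ j : ℕ, Summable fun k => |(Bw^[φ j] x) k - y k| ^ p :=
    fun j => stmt13_diff_summable p hp _ y (hsum j) hy
  have hcoord : ∀ (j : ℕ) (k : ℤ),
      |(Bw^[φ j] x) k - y k| ^ p ≤ ∑' i : ℤ, |(Bw^[φ j] x) i - y i| ^ p :=
    fun j k => Summable.le_tsum (hdiffs j) k (fun i _ => Real.rpow_nonneg (abs_nonneg _) p)
  have reflect : ∀ {A θ : ℝ}, 0 ≤ A → 0 < θ → A ^ p < θ ^ p → A < θ := by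
    intro A θ hA hθ h
    by_contra hc
    push_neg at hc
    exact absurd (Real.rpow_le_rpow hθ.le hc hp0) (not_le.mpr h)
  have Fpos : ∀ a b : ℤ, 0 < ∏ ν ∈ Finset.Ioc a b, |w ν| :=
    fun a b => Finset.prod_pos fun i _ => abs_pos.mpr (hw0 i)
  have Fle : ∀ a b : ℤ, (∏ ν ∈ Finset.Ioc a b, |w ν|) ≤ Cm ^ (b - a).toNat := by
    intro a b
    calc (∏ ν ∈ Finset.Ioc a b, |w ν|) ≤ ∏ _ν ∈ Finset.Ioc a b, Cm :=
          Finset.prod_le_prod (fun i _ => abs_nonneg _)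
            (fun i _ => (hbd i).trans (le_max_left _ _))
      _ = Cm ^ (Finset.Ioc a b).card := Finset.prod_const Cm
      _ = Cm ^ (b - a).toNat := by rw [Int.card_Ioc]
  have hφZ : Tendsto (fun j => (φ j : ℤ)) atTop atTop :=
    tendsto_natCast_atTop_atTop.comp
      (tendsto_atTop_mono (fun j => hφ.le_apply) tendsto_id)
  -- choose b
  have hYp2 : (0:ℝ) < (Y/2) ^ p := Real.rpow_pos_of_pos (by linarith) p
  obtain ⟨b, hEb0, hφb⟩ :=
    ((hE.eventually (gt_mem_nhds hYp2)).and
      (hφZ.eventually_ge_atTop ((φ 0 : ℤ) + 2*(p₀:ℤ) - 2*q))).exists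
  replace hEb0 : (∑' k : ℤ, |(Bw^[φ b] x) k - y k| ^ p) < (Y/2) ^ p := hEb0
  -- constants depending on b
  set slack : ℤ := (φ b : ℤ) - (φ 0 : ℤ) + 2*q - 2*(p₀:ℤ) with hslackdef
  have hslack : 0 ≤ slack := by rw [hslackdef]; linarith [hφb]
  set κ : ℝ := Cm ^ slack.toNat with hκdef
  have hκpos : 0 < κ := by rw [hκdef]; positivity
  set α₁ : ℝ := ∏ ν ∈ Finset.Ioc (min q 0) q, |w ν| with hα₁def
  set β₁ : ℝ := ∏ ν ∈ Finset.Ioc (min q 0) 0, |w ν| with hβ₁def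
  set α₂ : ℝ := ∏ ν ∈ Finset.Ioc q (max q 0), |w ν| with hα₂def
  set β₂ : ℝ := ∏ ν ∈ Finset.Ioc 0 (max q 0), |w ν| with hβ₂def
  have hα₁pos : 0 < α₁ := Fpos _ _
  have hβ₁pos : 0 < β₁ := Fpos _ _
  have hα₂pos : 0 < α₂ := Fpos _ _
  have hβ₂pos : 0 < β₂ := Fpos _ _
  set θ₂ : ℝ := α₁ * Y * ε / (4 * β₁) with hθ₂def
  have hθ₂pos : 0 < θ₂ := by
    rw [hθ₂def]
    exact div_pos (by positivity) (by positivity)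
  set τ : ℝ := ε * Y * β₂ / (4 * κ * α₂) with hτdef
  have hτpos : 0 < τ := by
    rw [hτdef]
    exact div_pos (by positivity) (by positivity)
  -- far coordinates of y are small
  have hSy : {k : ℤ | ¬ |y k| ^ p < (τ/2) ^ p}.Finite := by
    have h := hy.tendsto_cofinite_zero.eventually
      (gt_mem_nhds (Real.rpow_pos_of_pos (by linarith : (0:ℝ) < τ/2) p))
    exact Filter.eventually_cofinite.mp h
  obtain ⟨ly, hly⟩ := hSy.bddBelow
  have hysmall : ∀ k : ℤ, k < ly → |y k| < τ/2 := by
    intro k hk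
    refine reflect (abs_nonneg _) (by linarith) ?_
    by_contra hcc
    exact absurd (hly hcc) (not_le.mpr hk)
  -- far coordinates of Bw^[φ 0] x are small
  have hSa : {k : ℤ | ¬ |(Bw^[φ 0] x) k| ^ p < θ₂ ^ p}.Finite := by
    have h := (hsum 0).tendsto_cofinite_zero.eventually
      (gt_mem_nhds (Real.rpow_pos_of_pos hθ₂pos p))
    exact Filter.eventually_cofinite.mp h
  obtain ⟨ua, hua⟩ := hSa.bddAbove
  have hasmall : ∀ k : ℤ, ua < k → |(Bw^[φ 0] x) k| < θ₂ := by
    intro k hk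
    refine reflect (abs_nonneg _) hθ₂pos ?_
    by_contra hcc
    exact absurd (hua hcc) (not_le.mpr hk)
  -- choose c
  have hτp2 : (0:ℝ) < (τ/2) ^ p := Real.rpow_pos_of_pos (by linarith) p
  obtain ⟨c, ⟨⟨⟨⟨hEc1, hEc2⟩, hc3⟩, hc4⟩, hc5⟩, hbc⟩ :=
    ((((((hE.eventually (gt_mem_nhds hYp2)).and
        (hE.eventually (gt_mem_nhds hτp2))).and
        (hφZ.eventually_gt_atTop (q - ly + (φ b : ℤ)))).and
        (hφZ.eventually_gt_atTop (ua - q + (φ 0 : ℤ)))).and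
        (hφZ.eventually_ge_atTop (2*(p₀:ℤ) - q + (φ 0 : ℤ)))).and
      (eventually_gt_atTop b)).exists
  replace hEc1 : (∑' k : ℤ, |(Bw^[φ c] x) k - y k| ^ p) < (Y/2) ^ p := hEc1
  replace hEc2 : (∑' k : ℤ, |(Bw^[φ c] x) k - y k| ^ p) < (τ/2) ^ p := hEc2
  replace hc3 : q - ly + (φ b : ℤ) < (φ c : ℤ) := hc3
  replace hc4 : ua - q + (φ 0 : ℤ) < (φ c : ℤ) := hc4
  replace hc5 : 2*(p₀:ℤ) - q + (φ 0 : ℤ) ≤ (φ c : ℤ) := hc5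
  have h0c : φ 0 ≤ φ c := hφ.monotone (Nat.zero_le c)
  have hbcφ : φ b ≤ φ c := hφ.monotone hbc.le
  set d₂ : ℤ := (φ c : ℤ) - (φ 0 : ℤ) with hd₂def
  set d₁ : ℤ := (φ c : ℤ) - (φ b : ℤ) with hd₁def
  have hd₂0 : 0 ≤ d₂ := by rw [hd₂def]; simp; exact_mod_cast h0c
  have hd₁0 : 0 ≤ d₁ := by rw [hd₁def]; simp; exact_mod_cast hbcφ
  have hm₂ : ((φ c - φ 0 : ℕ) : ℤ) = d₂ := by rw [Nat.cast_sub h0c, hd₂def]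
  have hm₁ : ((φ c - φ b : ℕ) : ℤ) = d₁ := by rw [Nat.cast_sub hbcφ, hd₁def]
  have hqd₂ : 2*(p₀:ℤ) ≤ q + d₂ := by rw [hd₂def]; linarith
  have h0qd₂ : (0:ℤ) ≤ q + d₂ := le_trans (by positivity) hqd₂
  set t : ℤ := 2*q - 2*(p₀:ℤ) + d₂ with htdef
  set N : ℕ := (q + d₂ - (p₀:ℤ)).toNat with hNdef
  have hNZ : (N : ℤ) = q + d₂ - (p₀:ℤ) := by
    rw [hNdef]
    exact Int.toNat_of_nonneg (by linarith [Int.natCast_nonneg p₀])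
  have hp₀N : p₀ ≤ N := by
    have h : (p₀:ℤ) ≤ (N:ℤ) := by rw [hNZ]; linarith
    exact_mod_cast h
  -- FORWARD estimate
  have hiter2 : (Bw^[φ c] x) q
      = (∏ ν ∈ Finset.Ioc q (q + d₂), w ν) * (Bw^[φ 0] x) (q + d₂) := by
    have hφc : φ c = (φ c - φ 0) + φ 0 := (Nat.sub_add_cancel h0c).symm
    rw [hφc, Function.iterate_add_apply, hiter (φ c - φ 0) (Bw^[φ 0] x) q, hm₂]
  have habs1 : |(Bw^[φ c] x) q|
      = (∏ ν ∈ Finset.Ioc q (q + d₂), |w ν|) * |(Bw^[φ 0] x) (q + d₂)| := by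
    rw [hiter2, abs_mul, Finset.abs_prod]
  have hEc1' : |(Bw^[φ c] x) q - y q| < Y/2 :=
    reflect (abs_nonneg _) (by linarith) (lt_of_le_of_lt (hcoord c q) hEc1)
  have hzcq : Y/2 ≤ |(Bw^[φ c] x) q| := by
    have h2 := stmt13_tri ((Bw^[φ c] x) q) ((Bw^[φ c] x) q - y q)
    have h3 : (Bw^[φ c] x) q - ((Bw^[φ c] x) q - y q) = y q := by ring
    rw [h3, ← hYdef] at h2
    linarith
  have hza : |(Bw^[φ 0] x) (q + d₂)| < θ₂ := by
    apply hasmall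
    rw [hd₂def]
    linarith
  have hFq : Y/2 < (∏ ν ∈ Finset.Ioc q (q + d₂), |w ν|) * θ₂ := by
    calc Y/2 ≤ (∏ ν ∈ Finset.Ioc q (q + d₂), |w ν|) * |(Bw^[φ 0] x) (q + d₂)| := by
          rw [← habs1]; exact hzcq
      _ < (∏ ν ∈ Finset.Ioc q (q + d₂), |w ν|) * θ₂ :=
          mul_lt_mul_of_pos_left hza (Fpos _ _)
  have split1 : β₁ * (∏ ν ∈ Finset.Ioc 0 (q + d₂), |w ν|)
      = α₁ * (∏ ν ∈ Finset.Ioc q (q + d₂), |w ν|) := by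
    rw [hβ₁def, hα₁def,
      stmt13_prodIoc (fun ν => |w ν|) (min_le_right q 0) h0qd₂,
      stmt13_prodIoc (fun ν => |w ν|) (min_le_left q 0)
        (by linarith : q ≤ q + d₂)]
  have hforward : 1/ε < ∏ ν ∈ Finset.Ioc 0 (q + d₂), |w ν| := by
    have hcalc : α₁ * (Y/2) = (2*β₁/ε) * θ₂ := by
      rw [hθ₂def]
      field_simp
      ring
    have h1 : (2*β₁/ε) * θ₂
        < (β₁ * (∏ ν ∈ Finset.Ioc 0 (q + d₂), |w ν|)) * θ₂ := by
      calc (2*β₁/ε) * θ₂ = α₁ * (Y/2) := hcalc.symm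
        _ < α₁ * ((∏ ν ∈ Finset.Ioc q (q + d₂), |w ν|) * θ₂) :=
            mul_lt_mul_of_pos_left hFq hα₁pos
        _ = (α₁ * (∏ ν ∈ Finset.Ioc q (q + d₂), |w ν|)) * θ₂ := by ring
        _ = (β₁ * (∏ ν ∈ Finset.Ioc 0 (q + d₂), |w ν|)) * θ₂ := by rw [split1]
    have h2 : 2*β₁/ε < β₁ * (∏ ν ∈ Finset.Ioc 0 (q + d₂), |w ν|) :=
      lt_of_mul_lt_mul_right h1 hθ₂pos.le
    have h4 : β₁ * (1/ε) < β₁ * (∏ ν ∈ Finset.Ioc 0 (q + d₂), |w ν|) := by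
      have h5 : β₁ * (1/ε) < 2*β₁/ε := by
        rw [mul_one_div, div_lt_div_iff₀ hε hε]
        nlinarith
      linarith
    exact lt_of_mul_lt_mul_left h4 hβ₁pos.le
  -- BACKWARD estimate
  have hiter1 : (Bw^[φ c] x) (q - d₁)
      = (∏ ν ∈ Finset.Ioc (q - d₁) q, w ν) * (Bw^[φ b] x) q := by
    have hφc : φ c = (φ c - φ b) + φ b := (Nat.sub_add_cancel hbcφ).symm
    have harg : q - d₁ + d₁ = q := by ring
    rw [hφc, Function.iterate_add_apply, hiter (φ c - φ b) (Bw^[φ b] x) (q - d₁),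
      hm₁, harg]
  have habs2 : |(Bw^[φ c] x) (q - d₁)|
      = (∏ ν ∈ Finset.Ioc (q - d₁) q, |w ν|) * |(Bw^[φ b] x) q| := by
    rw [hiter1, abs_mul, Finset.abs_prod]
  have hEb' : |(Bw^[φ b] x) q - y q| < Y/2 :=
    reflect (abs_nonneg _) (by linarith) (lt_of_le_of_lt (hcoord b q) hEb0)
  have hzbq : Y/2 ≤ |(Bw^[φ b] x) q| := by
    have h2 := stmt13_tri ((Bw^[φ b] x) q) ((Bw^[φ b] x) q - y q)
    have h3 : (Bw^[φ b] x) q - ((Bw^[φ b] x) q - y q) = y q := by ring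
    rw [h3, ← hYdef] at h2
    linarith
  have hyd₁ : |y (q - d₁)| < τ/2 := by
    apply hysmall
    rw [hd₁def]
    linarith
  have hEc2' : |(Bw^[φ c] x) (q - d₁) - y (q - d₁)| < τ/2 :=
    reflect (abs_nonneg _) (by linarith) (lt_of_le_of_lt (hcoord c _) hEc2)
  have hzc2 : |(Bw^[φ c] x) (q - d₁)| < τ := by
    have h2 := abs_add_le (y (q - d₁)) ((Bw^[φ c] x) (q - d₁) - y (q - d₁))
    have h3 : y (q - d₁) + ((Bw^[φ c] x) (q - d₁) - y (q - d₁))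
        = (Bw^[φ c] x) (q - d₁) := by ring
    rw [h3] at h2
    linarith
  have hG : (∏ ν ∈ Finset.Ioc (q - d₁) q, |w ν|) * (Y/2) < τ := by
    calc (∏ ν ∈ Finset.Ioc (q - d₁) q, |w ν|) * (Y/2)
        ≤ (∏ ν ∈ Finset.Ioc (q - d₁) q, |w ν|) * |(Bw^[φ b] x) q| :=
          mul_le_mul_of_nonneg_left hzbq (Fpos _ _).le
      _ = |(Bw^[φ c] x) (q - d₁)| := habs2.symm
      _ < τ := hzc2
  have htslack : t - d₁ = slack := by
    rw [htdef, hd₁def, hd₂def, hslackdef]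
    ring
  have hd₁t : d₁ ≤ t := by linarith
  have hsplitH : (∏ ν ∈ Finset.Ioc (q - t) q, |w ν|)
      = (∏ ν ∈ Finset.Ioc (q - t) (q - d₁), |w ν|)
        * (∏ ν ∈ Finset.Ioc (q - d₁) q, |w ν|) :=
    (stmt13_prodIoc (fun ν => |w ν|) (by linarith : q - t ≤ q - d₁)
      (by linarith : q - d₁ ≤ q)).symm
  have hκG : (∏ ν ∈ Finset.Ioc (q - t) q, |w ν|)
      ≤ κ * (∏ ν ∈ Finset.Ioc (q - d₁) q, |w ν|) := by
    rw [hsplitH]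
    apply mul_le_mul_of_nonneg_right _ (Fpos _ _).le
    have h5 := Fle (q - t) (q - d₁)
    have h6 : (q - d₁) - (q - t) = slack := by linarith
    rw [h6] at h5
    rw [hκdef]
    exact h5
  have hqt : q - t = (p₀:ℤ) - (N:ℤ) := by rw [hNZ, htdef]; ring
  have hqt0 : q - t ≤ 0 := by
    rw [hqt]
    have : (p₀:ℤ) ≤ (N:ℤ) := by exact_mod_cast hp₀N
    linarith
  have split2 : (∏ ν ∈ Finset.Ioc (q - t) 0, |w ν|) * β₂
      = (∏ ν ∈ Finset.Ioc (q - t) q, |w ν|) * α₂ := by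
    rw [hβ₂def, hα₂def,
      stmt13_prodIoc (fun ν => |w ν|) hqt0 (le_max_right q 0),
      stmt13_prodIoc (fun ν => |w ν|) (by linarith [hd₁0, hd₁t] : q - t ≤ q)
        (le_max_left q 0)]
  have hbackward : (∏ ν ∈ Finset.Ioc (q - t) 0, |w ν|) < ε := by
    have hGτ : (∏ ν ∈ Finset.Ioc (q - d₁) q, |w ν|) < 2*τ/Y := by
      rw [lt_div_iff₀ hYpos]
      linarith
    have hQ : (∏ ν ∈ Finset.Ioc (q - t) 0, |w ν|) * β₂ < ε * β₂ / 2 := by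
      calc (∏ ν ∈ Finset.Ioc (q - t) 0, |w ν|) * β₂
          = (∏ ν ∈ Finset.Ioc (q - t) q, |w ν|) * α₂ := split2
        _ ≤ (κ * (∏ ν ∈ Finset.Ioc (q - d₁) q, |w ν|)) * α₂ :=
            mul_le_mul_of_nonneg_right hκG hα₂pos.le
        _ < (κ * (2*τ/Y)) * α₂ :=
            mul_lt_mul_of_pos_right (mul_lt_mul_of_pos_left hGτ hκpos) hα₂pos
        _ = ε * β₂ / 2 := by
            rw [hτdef]
            field_simp
            ring
    nlinarith [mul_pos hε hβ₂pos]
  -- conclusion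
  refine ⟨N, hp₀N, ?_, ?_⟩
  · have hIcc : Finset.Icc (1:ℤ) ((p₀:ℤ) + (N:ℤ)) = Finset.Ioc 0 (q + d₂) := by
      have hXX : (p₀:ℤ) + (N:ℤ) = q + d₂ := by rw [hNZ]; ring
      rw [hXX]
      ext i
      simp only [Finset.mem_Icc, Finset.mem_Ioc]
      omega
    rw [hIcc]
    exact hforward
  · have hIcc2 : Finset.Icc ((p₀:ℤ) - (N:ℤ) + 1) 0 = Finset.Ioc (q - t) 0 := by
      rw [← hqt]
      ext i
      simp only [Finset.mem_Icc, Finset.mem_Ioc]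
      omega
    rw [hIcc2]
    exact hbackward
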